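/- For fixed B_x = 4 and B_y = 3, the XOR distance D = X̄ ⊗ Ȳ and the inner product satisfy ⟨X,Y⟩ = (105N - 2D)/128; in particular D is an affine decreasing function of the inner product: D = (105N - 128⟨X,Y⟩)/2. -/

import Mathlib

/-- For B_x = 4, B_y = 3: with D = X̄ ⊗ Ȳ the XOR distance,
⟨X,Y⟩ = (105N - 2D)/128, and D = (105N - 128⟨X,Y⟩)/2. -/
theorem stmt_15 (N : ℕ)
    (a c : ℕ → ℕ → ℝ)
    (ha : ∀ i < 4, ∀ k < N, a i k = 1 ∨ a i k = -1)
    (hc : ∀ j < 3, ∀ k < N, c j k = 1 ∨ c j k = -1)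
    (x y : ℕ → ℝ)
    (hx : ∀ k < N, x k = (∑ i ∈ Finset.range 4, a i k * 2 ^ i) / 2 ^ 4)
    (hy : ∀ k < N, y k = (∑ j ∈ Finset.range 3, c j k * 2 ^ j) / 2 ^ 3)
    (σ : ℝ → ℝ) (hσ : ∀ t, σ t = (1 - t) / 2)
    (xor : ℝ → ℝ → ℝ) (hxor : ∀ u v, xor u v = u + v - 2 * u * v)
    (D : ℝ)
    (hD : D = ∑ k ∈ Finset.range N, ∑ i ∈ Finset.range 4,
      ∑ j ∈ Finset.range 3, xor (σ (a i k)) (σ (c j k)) * 2 ^ (i + j)) :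
    ∑ k ∈ Finset.range N, x k * y k = (105 * N - 2 * D) / 128 ∧
    D = (105 * N - 128 * ∑ k ∈ Finset.range N, x k * y k) / 2 := by
  have hkey : D = 105 * N / 2 - 64 * ∑ k ∈ Finset.range N, x k * y k := by
    have step : ∀ k ∈ Finset.range N, (∑ i ∈ Finset.range 4,
        ∑ j ∈ Finset.range 3, xor (σ (a i k)) (σ (c j k)) * 2 ^ (i + j))
        = 105 / 2 - 64 * (x k * y k) := by
      intro k hk
      rw [Finset.mem_range] at hk
      rw [hx k hk, hy k hk]
      simp only [hxor, hσ, Finset.sum_range_succ, Finset.sum_range_zero]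
      ring
    rw [hD, Finset.sum_congr rfl step, Finset.sum_sub_distrib,
      ← Finset.mul_sum, Finset.sum_const, Finset.card_range]
    push_cast; ring
  constructor
  · rw [hkey]; ring
  · rw [hkey]; ring
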